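/- Let A be a C*-algebra and X a normed A-bimodule. The set of elements of X satisfying Kishimoto's condition is a closed linear subspace of X. Consequently, if (X_i) is a family of aperiodic A-subbimodules of X whose sum is dense in X, then X is aperiodic. -/

import Mathlib

open scoped ComplexOrder ComplexInnerProductSpace
open Filter Topology

noncomputable section

section Hereditary

variable {A : Type*} [NonUnitalNormedRing A] [StarRing A] [Module ℂ A] [PartialOrder A]

/-- A hereditary subalgebra of a C*-algebra. -/
def IsHereditary (D : NonUnitalStarSubalgebra ℂ A) : Prop :=
  ∀ a d : A, d ∈ D → 0 ≤ a → a ≤ d → a ∈ D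

/-- A non-zero, closed, hereditary C*-subalgebra. -/
def NontrivClosedHereditary (D : NonUnitalStarSubalgebra ℂ A) : Prop :=
  IsClosed (D : Set A) ∧ (∃ d ∈ D, d ≠ 0) ∧ IsHereditary D

end Hereditary

section Bim

variable (A X : Type*) [NormedRing A] [NormedAlgebra ℂ A]
  [NormedAddCommGroup X] [NormedSpace ℂ X]

/-- A normed `A`-bimodule structure on the normed space `X`. -/
structure NormedBimoduleStr where
  lsmul : A → X → X
  rsmul : X → A → X
  lsmul_add : ∀ a x y, lsmul a (x + y) = lsmul a x + lsmul a y
  add_lsmul : ∀ a b x, lsmul (a + b) x = lsmul a x + lsmul b x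
  lsmul_smulc : ∀ (c : ℂ) a x, lsmul a (c • x) = c • lsmul a x
  rsmul_add : ∀ x y a, rsmul (x + y) a = rsmul x a + rsmul y a
  add_rsmul : ∀ x a b, rsmul x (a + b) = rsmul x a + rsmul x b
  rsmul_smulc : ∀ (c : ℂ) x a, rsmul (c • x) a = c • rsmul x a
  lsmul_mul : ∀ a b x, lsmul (a * b) x = lsmul a (lsmul b x)
  rsmul_mul : ∀ x a b, rsmul x (a * b) = rsmul (rsmul x a) b
  lsmul_rsmul : ∀ a x b, rsmul (lsmul a x) b = lsmul a (rsmul x b)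
  norm_lsmul_le : ∀ a x, ‖lsmul a x‖ ≤ ‖a‖ * ‖x‖
  norm_rsmul_le : ∀ x a, ‖rsmul x a‖ ≤ ‖x‖ * ‖a‖

variable {A X} [StarRing A] [PartialOrder A]

/-- Kishimoto's condition for an element of a normed `A`-bimodule. -/
def KishimotoBim (M : NormedBimoduleStr A X) (x : X) : Prop :=
  ∀ D : NonUnitalStarSubalgebra ℂ A, NontrivClosedHereditary D →
    ∀ ε : ℝ, 0 < ε → ∃ a ∈ D, 0 ≤ a ∧ ‖a‖ = 1 ∧ ‖M.lsmul a (M.rsmul x a)‖ < ε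

/-- Aperiodicity of a normed `A`-bimodule. -/
def AperiodicBim (M : NormedBimoduleStr A X) : Prop := ∀ x : X, KishimotoBim M x

/-- An `A`-subbimodule of a normed `A`-bimodule. -/
def IsSubBimoduleX (M : NormedBimoduleStr A X) (S : Submodule ℂ X) : Prop :=
  ∀ (a : A), ∀ x ∈ S, M.lsmul a x ∈ S ∧ M.rsmul x a ∈ S

end Bim


namespace KishAux

noncomputable def kfun : ℝ → ℝ := fun t => min (4*t) (max t (1/2))⁻¹
noncomputable def ffun : ℝ → ℝ := fun t => t * kfun t
noncomputable def gfun : ℝ → ℝ := fun t => max (2*t - 1) 0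

lemma kfun_cont : Continuous kfun := by
  apply Continuous.min (by fun_prop)
  exact ((continuous_id.max continuous_const).inv₀ (fun t => by positivity))

lemma ffun_cont : Continuous ffun := continuous_id.mul kfun_cont
lemma gfun_cont : Continuous gfun := by unfold gfun; fun_prop

lemma kfun_zero : kfun 0 = 0 := by norm_num [kfun]
lemma ffun_zero : ffun 0 = 0 := by simp [ffun]
lemma gfun_zero : gfun 0 = 0 := by norm_num [gfun]

lemma kfun_abs_le {t : ℝ} (ht : 0 ≤ t) : ‖kfun t‖ ≤ 2 := by
  rw [Real.norm_eq_abs, abs_le]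
  constructor
  · have h1 : (0:ℝ) ≤ 4 * t := by positivity
    have h2 : (0:ℝ) ≤ (max t (1/2))⁻¹ := by positivity
    have := le_min h1 h2
    unfold kfun; nlinarith [min_le_left (4*t) (max t (1/2))⁻¹]
  · unfold kfun
    refine (min_le_right _ _).trans ?_
    rw [inv_le_comm₀ (by positivity) (by norm_num)]
    exact le_trans (by norm_num) (le_max_right t (1/2))

lemma ffun_one_of_ge {t : ℝ} (ht : 1/2 ≤ t) : ffun t = 1 := by
  have ht0 : 0 < t := lt_of_lt_of_le (by norm_num) ht
  have hmax : max t (1/2) = t := max_eq_left ht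
  have hk : kfun t = t⁻¹ := by
    unfold kfun
    rw [hmax]
    refine min_eq_right ?_
    have h1 : t⁻¹ ≤ 2 := by
      rw [inv_le_comm₀ ht0 (by norm_num)]
      linarith
    linarith
  unfold ffun
  rw [hk, mul_inv_cancel₀ (ne_of_gt ht0)]

lemma ffun_mul_gfun : ∀ t : ℝ, ffun t * gfun t = gfun t := by
  intro t
  rcases le_or_gt (1/2) t with h | h
  · rw [ffun_one_of_ge h, one_mul]
  · have : gfun t = 0 := by unfold gfun; rw [max_eq_right]; linarith
    rw [this, mul_zero]

lemma gfun_ge_one {t : ℝ} (ht : 1 ≤ t) : 1 ≤ gfun t := by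
  unfold gfun; rw [max_eq_left (by linarith)]; linarith

section CStar
variable {A : Type*} [NormedRing A] [StarRing A] [CStarRing A] [NormedAlgebra ℂ A]
  [StarModule ℂ A] [PartialOrder A] [StarOrderedRing A] [CompleteSpace A]

instance (priority := 100) toCStarAlgAux : CStarAlgebra A :=
  { ‹NormedRing A›, ‹StarRing A›, ‹CStarRing A›, ‹NormedAlgebra ℂ A›, ‹StarModule ℂ A›,
    ‹CompleteSpace A› with }

lemma real_smul_nonneg {r : ℝ} (hr : 0 ≤ r) {p : A} (hp : 0 ≤ p) : 0 ≤ ((r : ℂ)) • p := by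
  have h := CFC.sqrt_mul_sqrt_self p hp
  set s := CFC.sqrt p with hs
  have hsa : IsSelfAdjoint s := (CFC.sqrt_nonneg (a := p)).isSelfAdjoint
  have key : ((r : ℂ)) • p = star (((Real.sqrt r : ℂ)) • s) * (((Real.sqrt r : ℂ)) • s) := by
    rw [star_smul, smul_mul_smul_comm, hsa.star_eq, h]
    congr 1
    simp [Complex.star_def, Complex.conj_ofReal, ← Complex.ofReal_mul, Real.mul_self_sqrt hr]
  rw [key]
  exact star_mul_self_nonneg _

lemma exists_pos_norm_one {D : NonUnitalStarSubalgebra ℂ A} (hD : NontrivClosedHereditary D) :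
    ∃ a ∈ D, 0 ≤ a ∧ ‖a‖ = 1 := by
  obtain ⟨-, ⟨d, hdD, hd0⟩, -⟩ := hD
  set p := star d * d with hp
  have hpD : p ∈ D := mul_mem (star_mem hdD) hdD
  have hpne : p ≠ 0 := by
    simpa [hp, CStarRing.star_mul_self_eq_zero_iff] using hd0
  have hpnn : 0 ≤ p := star_mul_self_nonneg d
  have hnorm : ‖p‖ ≠ 0 := norm_ne_zero_iff.mpr hpne
  refine ⟨((‖p‖⁻¹ : ℝ) : ℂ) • p, SMulMemClass.smul_mem _ hpD,
    real_smul_nonneg (by positivity) hpnn, ?_⟩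
  rw [norm_smul]
  simp [abs_of_nonneg (by positivity : (0:ℝ) ≤ ‖p‖⁻¹), inv_mul_cancel₀ hnorm]

lemma unit_absorb {e d c : A} (he : IsSelfAdjoint e) (hd1 : e * d = d) (hd2 : d * e = d)
    (hc : 0 ≤ c) (hcd : c ≤ d) : e * c = c ∧ c * e = c := by
  set T : A → A := fun z => z - e * z - z * e + e * z * e with hT
  have hTpos : ∀ z : A, 0 ≤ z → 0 ≤ T z := by
    intro z hz
    have h := CFC.sqrt_mul_sqrt_self z hz
    set s := CFC.sqrt z with hs
    have hsa : IsSelfAdjoint s := (CFC.sqrt_nonneg (a := z)).isSelfAdjoint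
    have key : T z = star (s - s * e) * (s - s * e) := by
      simp only [hT]
      rw [star_sub, star_mul, hsa.star_eq, he.star_eq, ← h]
      noncomm_ring
    rw [key]
    exact star_mul_self_nonneg _
  have hTd : T d = 0 := by
    simp only [hT, hd1, hd2]
    abel
  have hTcle : T c ≤ 0 := by
    have h1 : 0 ≤ T (d - c) := hTpos _ (sub_nonneg.mpr hcd)
    have h2 : T (d - c) = T d - T c := by simp only [hT]; noncomm_ring
    rw [h2, hTd, zero_sub] at h1
    exact neg_nonneg.mp h1
  have hTc : T c = 0 := le_antisymm hTcle (hTpos c hc)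
  have h := CFC.sqrt_mul_sqrt_self c hc
  set r := CFC.sqrt c with hr
  have hra : IsSelfAdjoint r := (CFC.sqrt_nonneg (a := c)).isSelfAdjoint
  have key : star (r - r * e) * (r - r * e) = T c := by
    simp only [hT]
    rw [star_sub, star_mul, hra.star_eq, he.star_eq, ← h]
    noncomm_ring
  rw [hTc] at key
  have hre : r - r * e = 0 := CStarRing.star_mul_self_eq_zero_iff _ |>.mp key
  have hre' : r * e = r := by rw [sub_eq_zero] at hre; exact hre.symm
  have hce : c * e = c := by rw [← h, mul_assoc, hre']
  refine ⟨?_, hce⟩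
  have := congrArg star hce
  rwa [star_mul, he.star_eq, hc.isSelfAdjoint.star_eq] at this

lemma cfcn_mem_of_closed {D : NonUnitalStarSubalgebra ℂ A} (hDc : IsClosed (D : Set A))
    {a : A} (ha : IsSelfAdjoint a) (haD : a ∈ D) (g : ℝ → ℝ)
    (hg : ContinuousOn g (quasispectrum ℝ a)) (hg0 : g 0 = 0) : cfcₙ g a ∈ D := by
  rw [cfcₙ_apply g a hg hg0 ha]
  set ψ : ContinuousMapZero (quasispectrum ℝ a) ℝ →⋆ₙₐ[ℝ] A := cfcₙHom ha with hψ
  have hcont : Continuous ψ := cfcₙHom_continuous ha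
  have h0 : ((0 : quasispectrum ℝ a) : ℝ) = 0 := rfl
  have main : ∀ f : ContinuousMapZero (quasispectrum ℝ a) ℝ, ψ f ∈ D := by
    intro f
    induction f using ContinuousMapZero.induction_on_of_compact with
    | zero => rw [map_zero]; exact zero_mem D
    | id =>
        have hid : ψ (ContinuousMapZero.id _) = a := cfcₙHom_id ha
        rw [hid]; exact haD
    | star_id =>
        have hid : ψ (ContinuousMapZero.id _) = a := cfcₙHom_id ha
        rw [map_star, hid]
        exact star_mem haD
    | add f g hf hg => rw [map_add]; exact add_mem hf hg
    | mul f g hf hg => rw [map_mul]; exact mul_mem hf hg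
    | smul r f hf =>
        rw [map_smul, ← Complex.coe_smul]
        exact SMulMemClass.smul_mem _ hf
    | frequently f hf =>
        have : f ∈ closure {g | ψ g ∈ D} := mem_closure_iff_frequently.mpr hf
        exact (hDc.preimage hcont).closure_subset this
  exact main _

lemma exists_ge_one_mem {a : A} (ha : 0 ≤ a) (h1 : ‖a‖ = 1) :
    ∃ t ∈ quasispectrum ℝ a, 1 ≤ t := by
  have ha' : IsSelfAdjoint a := ha.isSelfAdjoint
  obtain ⟨t₀, ht₀, hmax⟩ := (quasispectrum.isCompact a).exists_isMaxOn
    ⟨0, quasispectrum.zero_mem ℝ a⟩ continuousOn_id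
  refine ⟨t₀, ht₀, ?_⟩
  have hle : ‖a‖ ≤ t₀ := by
    conv_lhs => rw [← cfcₙ_id ℝ a]
    refine norm_cfcₙ_le fun t ht => ?_
    show |t| ≤ t₀
    rw [abs_of_nonneg (quasispectrum_nonneg_of_nonneg a ha t ht)]
    exact hmax ht
  linarith [h1 ▸ hle]

/-- the key construction: a "local unit" `e = w * a = a * w` with `‖w‖ ≤ 2` together with
a nontrivial closed hereditary subalgebra `D' ⊆ D` on which `e` acts as identity. -/
lemma exists_local_unit {D : NonUnitalStarSubalgebra ℂ A} (hD : NontrivClosedHereditary D)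
    {a : A} (haD : a ∈ D) (ha : 0 ≤ a) (hnorm : ‖a‖ = 1) :
    ∃ (e w : A) (D' : NonUnitalStarSubalgebra ℂ A), NontrivClosedHereditary D' ∧
      e = w * a ∧ e = a * w ∧ ‖w‖ ≤ 2 ∧
      (∀ b, b ∈ D' → b ∈ D ∧ e * b = b ∧ b * e = b) := by
  have ha' : IsSelfAdjoint a := ha.isSelfAdjoint
  set w : A := cfcₙ kfun a with hw
  set e : A := cfcₙ ffun a with he
  set d₀ : A := cfcₙ gfun a with hd₀
  have he_sa : IsSelfAdjoint e := cfcₙ_predicate ffun a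
  have he_wa : e = w * a := by
    rw [he, hw]
    calc cfcₙ ffun a = cfcₙ (fun t => kfun t * id t) a := by
          apply cfcₙ_congr; intro t _; simp [ffun, mul_comm]
      _ = cfcₙ kfun a * cfcₙ (id : ℝ → ℝ) a :=
          cfcₙ_mul _ _ a (kfun_cont.continuousOn) kfun_zero continuousOn_id rfl
      _ = cfcₙ kfun a * a := by rw [cfcₙ_id ℝ a]
  have he_aw : e = a * w := by
    rw [he, hw]
    calc cfcₙ ffun a = cfcₙ (fun t => id t * kfun t) a := by
          apply cfcₙ_congr; intro t _; simp [ffun]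
      _ = cfcₙ (id : ℝ → ℝ) a * cfcₙ kfun a :=
          cfcₙ_mul _ _ a continuousOn_id rfl (kfun_cont.continuousOn) kfun_zero
      _ = a * cfcₙ kfun a := by rw [cfcₙ_id ℝ a]
  have hw2 : ‖w‖ ≤ 2 := by
    rw [hw]
    exact norm_cfcₙ_le fun t ht => kfun_abs_le (quasispectrum_nonneg_of_nonneg a ha t ht)
  have hd₀D : d₀ ∈ D := cfcn_mem_of_closed hD.1 ha' haD gfun gfun_cont.continuousOn gfun_zero
  have hd₀ne : d₀ ≠ 0 := by
    obtain ⟨t₀, ht₀, h1t₀⟩ := exists_ge_one_mem ha hnorm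
    have hb := norm_apply_le_norm_cfcₙ gfun a ht₀ gfun_cont.continuousOn gfun_zero ha'
    have : (1:ℝ) ≤ ‖d₀‖ := by
      refine le_trans ?_ hb
      rw [Real.norm_eq_abs, abs_of_nonneg (le_max_right _ _)]
      exact gfun_ge_one h1t₀
    intro hcon
    rw [hcon, norm_zero] at this
    linarith
  have hed₀ : e * d₀ = d₀ := by
    rw [he, hd₀, ← cfcₙ_mul ffun gfun a ffun_cont.continuousOn ffun_zero
      gfun_cont.continuousOn gfun_zero]
    exact cfcₙ_congr fun t _ => ffun_mul_gfun t
  have hd₀e : d₀ * e = d₀ := by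
    rw [he, hd₀, ← cfcₙ_mul gfun ffun a gfun_cont.continuousOn gfun_zero
      ffun_cont.continuousOn ffun_zero]
    exact cfcₙ_congr fun t _ => (mul_comm (gfun t) (ffun t)) ▸ ffun_mul_gfun t
  refine ⟨e, w, {
    carrier := {d | d ∈ D ∧ e * d = d ∧ d * e = d}
    add_mem' := fun {x y} hx hy => ⟨add_mem hx.1 hy.1,
      by rw [mul_add, hx.2.1, hy.2.1], by rw [add_mul, hx.2.2, hy.2.2]⟩
    zero_mem' := ⟨zero_mem D, mul_zero e, zero_mul e⟩
    mul_mem' := fun {x y} hx hy => ⟨mul_mem hx.1 hy.1,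
      by rw [← mul_assoc, hx.2.1], by rw [mul_assoc, hy.2.2]⟩
    smul_mem' := fun c x hx => ⟨SMulMemClass.smul_mem c hx.1,
      by rw [mul_smul_comm, hx.2.1], by rw [smul_mul_assoc, hx.2.2]⟩
    star_mem' := fun {x} hx => ⟨star_mem hx.1,
      by nth_rewrite 1 [← he_sa.star_eq]; rw [← star_mul, hx.2.2],
      by nth_rewrite 1 [← he_sa.star_eq]; rw [← star_mul, hx.2.1]⟩ },
    ⟨?_, ⟨d₀, ⟨hd₀D, hed₀, hd₀e⟩, hd₀ne⟩, ?_⟩, he_wa, he_aw, hw2, fun b hb => hb⟩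
  · have hset : {d | d ∈ D ∧ e * d = d ∧ d * e = d} =
        (D : Set A) ∩ ({d | e * d = d} ∩ {d | d * e = d}) := by
      ext z; simp [Set.mem_inter_iff, and_assoc]
    show IsClosed {d | d ∈ D ∧ e * d = d ∧ d * e = d}
    rw [hset]
    exact hD.1.inter ((isClosed_eq (by fun_prop) continuous_id).inter
      (isClosed_eq (by fun_prop) continuous_id))
  · intro c d hd hc hcd
    obtain ⟨h1, h2⟩ := unit_absorb he_sa hd.2.1 hd.2.2 hc hcd
    exact ⟨hD.2.2 c d hd.1 hc hcd, h1, h2⟩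

end CStar

section BimAux

variable {A X : Type*} [NormedRing A] [NormedAlgebra ℂ A]
  [NormedAddCommGroup X] [NormedSpace ℂ X] [StarRing A] [PartialOrder A]

/-- the sandwich `x ↦ a • x • a` as a linear map. -/
def sand (M : NormedBimoduleStr A X) (a : A) : X →ₗ[ℂ] X where
  toFun x := M.lsmul a (M.rsmul x a)
  map_add' x y := by
    show M.lsmul a (M.rsmul (x + y) a) = M.lsmul a (M.rsmul x a) + M.lsmul a (M.rsmul y a)
    rw [M.rsmul_add, M.lsmul_add]
  map_smul' c x := by
    show M.lsmul a (M.rsmul (c • x) a) = c • M.lsmul a (M.rsmul x a)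
    rw [M.rsmul_smulc, M.lsmul_smulc]

lemma norm_sand_le (M : NormedBimoduleStr A X) (a : A) (x : X) :
    ‖sand M a x‖ ≤ ‖a‖ * ‖x‖ * ‖a‖ := by
  refine (M.norm_lsmul_le a (M.rsmul x a)).trans ?_
  rw [mul_assoc]
  exact mul_le_mul_of_nonneg_left (M.norm_rsmul_le x a) (norm_nonneg a)

variable [CStarRing A] [StarModule ℂ A] [StarOrderedRing A] [CompleteSpace A]

lemma kish_zero (M : NormedBimoduleStr A X) : KishimotoBim M (0 : X) := by
  intro D hD ε hε
  obtain ⟨a, haD, ha, hnorm⟩ := exists_pos_norm_one hD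
  refine ⟨a, haD, ha, hnorm, ?_⟩
  show ‖sand M a 0‖ < ε
  rw [map_zero, norm_zero]
  exact hε

lemma kish_smul (M : NormedBimoduleStr A X) (c : ℂ) {x : X} (hx : KishimotoBim M x) :
    KishimotoBim M (c • x) := by
  intro D hD ε hε
  rcases eq_or_ne c 0 with rfl | hc
  · obtain ⟨a, haD, ha, hnorm⟩ := exists_pos_norm_one hD
    refine ⟨a, haD, ha, hnorm, ?_⟩
    show ‖sand M a ((0:ℂ) • x)‖ < ε
    rw [zero_smul, map_zero, norm_zero]
    exact hε
  · have hcpos : 0 < ‖c‖ := norm_pos_iff.mpr hc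
    obtain ⟨a, haD, ha, hnorm, hax⟩ := hx D hD (ε / ‖c‖) (by positivity)
    refine ⟨a, haD, ha, hnorm, ?_⟩
    show ‖sand M a (c • x)‖ < ε
    rw [map_smul, norm_smul]
    calc ‖c‖ * ‖sand M a x‖ < ‖c‖ * (ε / ‖c‖) := by
          exact mul_lt_mul_of_pos_left hax hcpos
      _ = ε := by rw [mul_comm, div_mul_cancel₀ _ (ne_of_gt hcpos)]

lemma kish_add (M : NormedBimoduleStr A X) {x y : X} (hx : KishimotoBim M x)
    (hy : KishimotoBim M y) : KishimotoBim M (x + y) := by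
  intro D hD ε hε
  obtain ⟨a, haD, ha, hnorm, hax⟩ := hx D hD (ε/8) (by positivity)
  obtain ⟨e, w, D', hD', he_wa, he_aw, hw2, hsub⟩ := exists_local_unit hD haD ha hnorm
  obtain ⟨b, hbD', hb, hbnorm, hby⟩ := hy D' hD' (ε/2) (by positivity)
  obtain ⟨hbD, heb, hbe⟩ := hsub b hbD'
  refine ⟨b, hbD, hb, hbnorm, ?_⟩
  have hkey : M.lsmul b (M.rsmul x b) = M.lsmul b (M.rsmul (M.lsmul e (M.rsmul x e)) b) := by
    conv_rhs => rw [M.lsmul_rsmul, ← M.lsmul_mul, hbe, ← M.rsmul_mul, heb]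
  have hExe : M.lsmul e (M.rsmul x e) = M.lsmul w (M.rsmul (M.lsmul a (M.rsmul x a)) w) := by
    conv_rhs => rw [M.lsmul_rsmul, ← M.lsmul_mul, ← he_wa, ← M.rsmul_mul, ← he_aw]
  have hE : ‖M.lsmul e (M.rsmul x e)‖ < ε/2 := by
    rw [hExe]
    set S := ‖M.lsmul a (M.rsmul x a)‖ with hSdef
    have hsn : 0 ≤ S := norm_nonneg _
    have hwn : 0 ≤ ‖w‖ := norm_nonneg _
    have h1 : ‖M.lsmul w (M.rsmul (M.lsmul a (M.rsmul x a)) w)‖ ≤ ‖w‖ * (S * ‖w‖) := by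
      refine (M.norm_lsmul_le w _).trans ?_
      exact mul_le_mul_of_nonneg_left (M.norm_rsmul_le _ w) hwn
    have h2 : ‖w‖ * (S * ‖w‖) ≤ 2 * (S * 2) := by
      have hSw : S * ‖w‖ ≤ S * 2 := mul_le_mul_of_nonneg_left hw2 hsn
      exact mul_le_mul hw2 hSw (by positivity) (by norm_num)
    have h3 : 2 * (S * 2) < ε/2 := by
      have : S < ε/8 := hax
      linarith
    linarith
  have hbx : ‖M.lsmul b (M.rsmul x b)‖ < ε/2 := by
    rw [hkey]
    have h1 : ‖M.lsmul b (M.rsmul (M.lsmul e (M.rsmul x e)) b)‖ ≤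
        ‖b‖ * (‖M.lsmul e (M.rsmul x e)‖ * ‖b‖) := by
      refine (M.norm_lsmul_le b _).trans ?_
      exact mul_le_mul_of_nonneg_left (M.norm_rsmul_le _ b) (norm_nonneg b)
    rw [hbnorm, one_mul, mul_one] at h1
    exact lt_of_le_of_lt h1 hE
  have hsplit : M.lsmul b (M.rsmul (x + y) b)
      = M.lsmul b (M.rsmul x b) + M.lsmul b (M.rsmul y b) := by
    rw [M.rsmul_add, M.lsmul_add]
  calc ‖M.lsmul b (M.rsmul (x + y) b)‖
      ≤ ‖M.lsmul b (M.rsmul x b)‖ + ‖M.lsmul b (M.rsmul y b)‖ := by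
        rw [hsplit]; exact norm_add_le _ _
    _ < ε/2 + ε/2 := add_lt_add hbx hby
    _ = ε := by ring

lemma kish_isClosed (M : NormedBimoduleStr A X) : IsClosed {x : X | KishimotoBim M x} := by
  refine isClosed_of_closure_subset fun x hx => ?_
  intro D hD ε hε
  obtain ⟨y, hy, hxy⟩ := Metric.mem_closure_iff.mp hx (ε/2) (by positivity)
  obtain ⟨a, haD, ha, hnorm, hay⟩ := hy D hD (ε/2) (by positivity)
  refine ⟨a, haD, ha, hnorm, ?_⟩
  show ‖sand M a x‖ < ε
  have hdecomp : sand M a x = sand M a (x - y) + sand M a y := by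
    rw [← map_add]
    congr 1
    abel
  have h1 : ‖sand M a (x - y)‖ ≤ ‖x - y‖ := by
    have := norm_sand_le M a (x - y)
    rw [hnorm] at this
    simpa using this
  have h2 : ‖x - y‖ < ε/2 := by
    rw [← dist_eq_norm]
    exact hxy
  calc ‖sand M a x‖ ≤ ‖sand M a (x - y)‖ + ‖sand M a y‖ := by
        rw [hdecomp]; exact norm_add_le _ _
    _ < ε/2 + ε/2 := add_lt_add (lt_of_le_of_lt h1 h2) hay
    _ = ε := by ring

end BimAux
end KishAux

/-- the set of elements of a normed `A`-bimodule `X` satisfying Kishimoto's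
condition is a closed linear subspace of `X`; consequently, if a family of aperiodic
`A`-subbimodules has dense sum, then `X` is aperiodic. -/
theorem kishimoto_set_isClosed_submodule_and_dense_sum_aperiodic
    {A X : Type*} [NormedRing A] [StarRing A] [CStarRing A] [NormedAlgebra ℂ A]
    [StarModule ℂ A] [PartialOrder A] [StarOrderedRing A] [CompleteSpace A]
    [NormedAddCommGroup X] [NormedSpace ℂ X] (M : NormedBimoduleStr A X) :
    (∃ S : Submodule ℂ X, IsClosed (S : Set X) ∧ (S : Set X) = {x : X | KishimotoBim M x}) ∧
    (∀ (ιT : Type) (Xi : ιT → Submodule ℂ X), (∀ i, IsSubBimoduleX M (Xi i)) →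
      (∀ i, ∀ x ∈ Xi i, KishimotoBim M x) →
      Dense ((⨆ i, Xi i : Submodule ℂ X) : Set X) → AperiodicBim M) := by
  classical
  set S : Submodule ℂ X := {
    carrier := {x : X | KishimotoBim M x}
    add_mem' := fun hx hy => KishAux.kish_add M hx hy
    zero_mem' := KishAux.kish_zero M
    smul_mem' := fun c x hx => KishAux.kish_smul M c hx } with hS
  have hSclosed : IsClosed (S : Set X) := KishAux.kish_isClosed M
  refine ⟨⟨S, hSclosed, rfl⟩, ?_⟩
  intro ιT Xi hXiSub hXiK hdense x
  have hle : (⨆ i, Xi i : Submodule ℂ X) ≤ S := by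
    refine iSup_le fun i z hz => ?_
    exact hXiK i z hz
  have hsub : ((⨆ i, Xi i : Submodule ℂ X) : Set X) ⊆ (S : Set X) := hle
  have hclos : closure ((⨆ i, Xi i : Submodule ℂ X) : Set X) ⊆ (S : Set X) :=
    hSclosed.closure_subset_iff.mpr hsub
  have : x ∈ (S : Set X) := hclos (hdense.closure_eq ▸ Set.mem_univ x)
  exact this
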